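/- In the Hecke algebra Hₙ, the sum of the Murphy operators M = ∑_{j=2}^{n} M(j) = ∑_{1 ≤ i < j ≤ n} ω_{(i j)} is central: it commutes with every element of Hₙ. -/

import Mathlib

/-- The defining relations of the Hecke algebra `Hₙ` of type `A` over a
commutative ring `R` with invertible parameter `s` (and `z = s - s⁻¹`), imposed
on the free `R`-algebra on generators `σ₁, …, σ_{n-1}` (indexed by `Fin (n-1)`,
so the generator `σ_k` corresponds to the index `k - 1`):
far-apart commutation, the braid relations, and the quadratic relations
`σᵢ² = z σᵢ + 1`. -/
inductive HeckeRel (R : Type*) [CommRing R] (s : Rˣ) (n : ℕ) :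
    FreeAlgebra R (Fin (n - 1)) → FreeAlgebra R (Fin (n - 1)) → Prop
  | comm (i j : Fin (n - 1)) (h : (i : ℕ) + 2 ≤ (j : ℕ)) :
      HeckeRel R s n (FreeAlgebra.ι R i * FreeAlgebra.ι R j)
        (FreeAlgebra.ι R j * FreeAlgebra.ι R i)
  | braid (i j : Fin (n - 1)) (h : (j : ℕ) = (i : ℕ) + 1) :
      HeckeRel R s n (FreeAlgebra.ι R i * FreeAlgebra.ι R j * FreeAlgebra.ι R i)
        (FreeAlgebra.ι R j * FreeAlgebra.ι R i * FreeAlgebra.ι R j)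
  | quad (i : Fin (n - 1)) :
      HeckeRel R s n (FreeAlgebra.ι R i * FreeAlgebra.ι R i)
        (((s : R) - ((s⁻¹ : Rˣ) : R)) • FreeAlgebra.ι R i + 1)

/-- The Hecke algebra `Hₙ`: the quotient of the free `R`-algebra on
`σ₁, …, σ_{n-1}` by the two-sided ideal generated by the Hecke relations. -/
abbrev Hecke (R : Type*) [CommRing R] (s : Rˣ) (n : ℕ) : Type _ :=
  RingQuot (HeckeRel R s n)

variable {R : Type*} [CommRing R]

/-- The generator `σ_{k+1}` of the Hecke algebra `Hₙ` (0-based index `k`, so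
`heckeGen s n (k-1)` is the generator `σ_k` for `1 ≤ k ≤ n-1`); indices out of
range give `1`. -/
noncomputable def heckeGen (s : Rˣ) (n k : ℕ) : Hecke R s n :=
  if h : k < n - 1 then RingQuot.mkAlgHom R (HeckeRel R s n) (FreeAlgebra.ι R ⟨k, h⟩) else 1

/-- The ascending product `σ_i σ_{i+1} ⋯ σ_{j-1}` in `Hₙ` (1-based labels). -/
noncomputable def ascProd (s : Rˣ) (n i j : ℕ) : Hecke R s n :=
  ((List.range (j - i)).map (fun t => heckeGen s n (i - 1 + t))).prod

/-- The descending product `σ_{j-1} σ_{j-2} ⋯ σ_i` in `Hₙ` (1-based labels). -/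
noncomputable def descProd (s : Rˣ) (n i j : ℕ) : Hecke R s n :=
  (((List.range (j - i)).map (fun t => heckeGen s n (i - 1 + t))).reverse).prod

/-- The element `T(j) = (σ_{j-1} ⋯ σ₁)(σ₁ ⋯ σ_{j-1})` of `Hₙ`, with `T(1) = 1`. -/
noncomputable def heckeT (s : Rˣ) (n j : ℕ) : Hecke R s n :=
  descProd s n 1 j * ascProd s n 1 j

/-- The positive permutation braid element
`ω_{(i j)} = σ_{j-1} ⋯ σ_{i+1} · σᵢ · σ_{i+1} ⋯ σ_{j-1}` of `Hₙ`, for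
`1 ≤ i < j ≤ n` (for `j = i + 1` this is just `σᵢ`). -/
noncomputable def omegaBraid (s : Rˣ) (n i j : ℕ) : Hecke R s n :=
  descProd s n (i + 1) j * heckeGen s n (i - 1) * ascProd s n (i + 1) j

/-- The Murphy operator `M(j) = ∑_{i=1}^{j-1} ω_{(i j)}` in `Hₙ`. -/
noncomputable def murphyOp (s : Rˣ) (n j : ℕ) : Hecke R s n :=
  ∑ i ∈ Finset.Ico 1 j, omegaBraid s n i j

section MurphyCentral

variable (s : Rˣ) (n : ℕ)

private lemma hg_out {k : ℕ} (h : ¬ k < n - 1) : heckeGen (R := R) s n k = 1 :=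
  dif_neg h

private lemma hg_in {k : ℕ} (h : k < n - 1) :
    heckeGen (R := R) s n k
      = RingQuot.mkAlgHom R (HeckeRel R s n) (FreeAlgebra.ι R ⟨k, h⟩) :=
  dif_pos h

private lemma hg_comm {a b : ℕ} (h : a + 2 ≤ b) :
    Commute (heckeGen (R := R) s n a) (heckeGen s n b) := by
  by_cases hb : b < n - 1
  · have ha : a < n - 1 := by omega
    rw [hg_in s n ha, hg_in s n hb]
    have := RingQuot.mkAlgHom_rel R
      (HeckeRel.comm (R := R) (s := s) (n := n) ⟨a, ha⟩ ⟨b, hb⟩ h)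
    simp only [map_mul] at this
    exact this
  · rw [hg_out s n hb]; exact Commute.one_right _

private lemma hg_comm' {a b : ℕ} (h : a + 2 ≤ b ∨ b + 2 ≤ a) :
    Commute (heckeGen (R := R) s n a) (heckeGen s n b) :=
  h.elim (hg_comm s n) (fun h' => (hg_comm s n h').symm)

private lemma hg_braid {a : ℕ} (h : a + 1 < n - 1) :
    heckeGen (R := R) s n a * heckeGen s n (a+1) * heckeGen s n a
      = heckeGen s n (a+1) * heckeGen s n a * heckeGen s n (a+1) := by
  have ha : a < n - 1 := by omega
  rw [hg_in s n ha, hg_in s n h]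
  have := RingQuot.mkAlgHom_rel R
    (HeckeRel.braid (R := R) (s := s) (n := n) ⟨a, ha⟩ ⟨a+1, h⟩ rfl)
  simpa [map_mul] using this

private lemma hg_quad {a : ℕ} (h : a < n - 1) :
    heckeGen (R := R) s n a * heckeGen s n a
      = ((s : R) - ((s⁻¹ : Rˣ) : R)) • heckeGen s n a + 1 := by
  rw [hg_in s n h]
  have := RingQuot.mkAlgHom_rel R (HeckeRel.quad (R := R) (s := s) (n := n) ⟨a, h⟩)
  simpa [map_mul, map_add, map_smul, map_one] using this

private lemma asc_succ {i j : ℕ} (h1 : 1 ≤ i) (h2 : i ≤ j) :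
    ascProd (R := R) s n i (j+1) = ascProd s n i j * heckeGen s n (j-1) := by
  have e : j + 1 - i = (j - i) + 1 := by omega
  have e2 : i - 1 + (j - i) = j - 1 := by omega
  simp only [ascProd, e, List.range_succ, List.map_append, List.prod_append,
    List.map_cons, List.map_nil, List.prod_cons, List.prod_nil, mul_one, e2]

private lemma desc_succ {i j : ℕ} (h1 : 1 ≤ i) (h2 : i ≤ j) :
    descProd (R := R) s n i (j+1) = heckeGen s n (j-1) * descProd s n i j := by
  have e : j + 1 - i = (j - i) + 1 := by omega
  have e2 : i - 1 + (j - i) = j - 1 := by omega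
  simp only [descProd, e, List.range_succ, List.map_append, List.reverse_append,
    List.map_cons, List.map_nil, List.reverse_cons, List.reverse_nil, List.nil_append,
    List.cons_append, List.prod_cons, List.prod_nil, List.prod_append, mul_one, e2]

private lemma asc_cons {i j : ℕ} (h1 : 1 ≤ i) (h2 : i < j) :
    ascProd (R := R) s n i j = heckeGen s n (i-1) * ascProd s n (i+1) j := by
  have e : j - i = (j - (i+1)) + 1 := by omega
  have e2 : ∀ t : ℕ, i - 1 + (t + 1) = i + 1 - 1 + t := by omega
  simp only [ascProd, e, List.range_succ_eq_map, List.map_cons, List.prod_cons,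
    List.map_map, Function.comp_def, Nat.succ_eq_add_one, e2, add_zero]

private lemma desc_cons {i j : ℕ} (h1 : 1 ≤ i) (h2 : i < j) :
    descProd (R := R) s n i j = descProd s n (i+1) j * heckeGen s n (i-1) := by
  have e : j - i = (j - (i+1)) + 1 := by omega
  have e2 : ∀ t : ℕ, i - 1 + (t + 1) = i + 1 - 1 + t := by omega
  simp only [descProd, e, List.range_succ_eq_map, List.map_cons, List.reverse_cons,
    List.map_map, Function.comp_def, Nat.succ_eq_add_one, e2, add_zero,
    List.prod_append, List.prod_cons, List.prod_nil, mul_one]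

private lemma commute_asc {x : Hecke R s n} {i j : ℕ}
    (h : ∀ t, t < j - i → Commute x (heckeGen s n (i - 1 + t))) :
    Commute x (ascProd s n i j) := by
  apply Commute.list_prod_right
  intro y hy
  simp only [List.mem_map, List.mem_range] at hy
  obtain ⟨t, ht, rfl⟩ := hy
  exact h t ht

private lemma commute_desc {x : Hecke R s n} {i j : ℕ}
    (h : ∀ t, t < j - i → Commute x (heckeGen s n (i - 1 + t))) :
    Commute x (descProd s n i j) := by
  apply Commute.list_prod_right
  intro y hy
  simp only [List.mem_reverse, List.mem_map, List.mem_range] at hy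
  obtain ⟨t, ht, rfl⟩ := hy
  exact h t ht

private lemma omega_base (i : ℕ) :
    omegaBraid (R := R) s n i (i+1) = heckeGen s n (i-1) := by
  simp [omegaBraid, ascProd, descProd, Nat.sub_self]

private lemma omega_succ {i j : ℕ} (h1 : 1 ≤ i) (h2 : i < j) :
    omegaBraid (R := R) s n i (j+1)
      = heckeGen s n (j-1) * omegaBraid s n i j * heckeGen s n (j-1) := by
  rw [omegaBraid, omegaBraid, desc_succ s n (by omega) (by omega : i + 1 ≤ j),
    asc_succ s n (by omega) (by omega : i + 1 ≤ j)]
  simp only [mul_assoc]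

private lemma commute_omega_far {k i j : ℕ} (h1 : 1 ≤ i) (h2 : i < j)
    (h : j ≤ k ∨ k + 3 ≤ i) :
    Commute (heckeGen (R := R) s n k) (omegaBraid s n i j) := by
  rw [omegaBraid]
  refine Commute.mul_right (Commute.mul_right ?_ ?_) ?_
  · exact commute_desc s n (fun t ht => hg_comm' s n (by omega))
  · exact hg_comm' s n (by omega)
  · exact commute_asc s n (fun t ht => hg_comm' s n (by omega))

private lemma braid_conj_aux {A : Type*} [Monoid A] (a b X : A)
    (hbr : a * b * a = b * a * b) (hX : b * X = X * b) :
    a * (b * (a * X * a) * b) = (b * (a * X * a) * b) * a := by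
  calc a * (b * (a * X * a) * b)
      = a * b * a * X * (a * b) := by simp only [mul_assoc]
    _ = b * a * b * X * (a * b) := by rw [hbr]
    _ = b * a * (b * X) * (a * b) := by simp only [mul_assoc]
    _ = b * a * (X * b) * (a * b) := by rw [hX]
    _ = b * a * X * (b * a * b) := by simp only [mul_assoc]
    _ = b * a * X * (a * b * a) := by rw [← hbr]
    _ = (b * (a * X * a) * b) * a := by simp only [mul_assoc]

private lemma commute_omega_inside {k i j : ℕ} (h1 : 1 ≤ i) (h2 : i ≤ k)
    (h3 : k + 3 ≤ j) (h4 : j ≤ n) :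
    Commute (heckeGen (R := R) s n k) (omegaBraid s n i j) := by
  induction j, h3 using Nat.le_induction with
  | base =>
    have e1 : omegaBraid (R := R) s n i (k+3)
        = heckeGen s n (k+1) * omegaBraid s n i (k+2) * heckeGen s n (k+1) := by
      have := omega_succ s n (i := i) (j := k+2) h1 (by omega)
      simpa using this
    have e2 : omegaBraid (R := R) s n i (k+2)
        = heckeGen s n k * omegaBraid s n i (k+1) * heckeGen s n k := by
      have := omega_succ s n (i := i) (j := k+1) h1 (by omega)
      simpa using this
    have hX : heckeGen (R := R) s n (k+1) * omegaBraid s n i (k+1)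
        = omegaBraid s n i (k+1) * heckeGen s n (k+1) :=
      commute_omega_far s n (k := k+1) h1 (by omega) (by omega)
    have hbr : heckeGen (R := R) s n k * heckeGen s n (k+1) * heckeGen s n k
        = heckeGen s n (k+1) * heckeGen s n k * heckeGen s n (k+1) :=
      hg_braid s n (by omega)
    rw [e1, e2]
    exact braid_conj_aux _ _ _ hbr hX
  | succ j hj ih =>
    have e : omegaBraid (R := R) s n i (j+1)
        = heckeGen s n (j-1) * omegaBraid s n i j * heckeGen s n (j-1) :=
      omega_succ s n h1 (by omega)
    rw [e]
    have hg : Commute (heckeGen (R := R) s n k) (heckeGen s n (j-1)) :=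
      hg_comm' s n (by omega)
    exact Commute.mul_right (Commute.mul_right hg (ih (by omega))) hg

private lemma omega_front {i j : ℕ} (h1 : 1 ≤ i) (h2 : i + 1 < j) (h3 : j ≤ n) :
    omegaBraid (R := R) s n i j
      = heckeGen s n (i-1) * omegaBraid s n (i+1) j * heckeGen s n (i-1) := by
  have hd : descProd (R := R) s n (i+1) j
      = descProd s n (i+1+1) j * heckeGen s n (i+1-1) :=
    desc_cons s n (by omega) h2
  have ha : ascProd (R := R) s n (i+1) j
      = heckeGen s n (i+1-1) * ascProd s n (i+1+1) j :=
    asc_cons s n (by omega) h2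
  have hcd : Commute (heckeGen (R := R) s n (i-1)) (descProd s n (i+1+1) j) :=
    commute_desc s n (fun t ht => hg_comm' s n (by omega))
  have hca : Commute (heckeGen (R := R) s n (i-1)) (ascProd s n (i+1+1) j) :=
    commute_asc s n (fun t ht => hg_comm' s n (by omega))
  have hb : heckeGen (R := R) s n (i-1) * heckeGen s n i * heckeGen s n (i-1)
      = heckeGen s n i * heckeGen s n (i-1) * heckeGen s n i := by
    have e : i - 1 + 1 = i := by omega
    have := hg_braid s n (a := i-1) (by omega)
    rwa [e] at this
  rw [omegaBraid, omegaBraid, hd, ha]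
  simp only [Nat.add_sub_cancel]
  set D := descProd (R := R) s n (i+1+1) j
  set A := ascProd (R := R) s n (i+1+1) j
  set g := heckeGen (R := R) s n (i-1)
  set u := heckeGen (R := R) s n i
  calc D * u * g * (u * A)
      = D * (u * g * u) * A := by simp only [mul_assoc]
    _ = D * (g * u * g) * A := by rw [← hb]
    _ = (D * g) * u * (g * A) := by simp only [mul_assoc]
    _ = (g * D) * u * (A * g) := by rw [← hcd.eq, hca.eq]
    _ = g * (D * u * A) * g := by simp only [mul_assoc]

private lemma quad_pair_aux {H : Type*} [Ring H] [Module R H] [SMulCommClass R H H]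
    [IsScalarTower R H H] (G X : H) (z : R)
    (h : G * G = z • G + 1) :
    G * (X + G * X * G) = (X + G * X * G) * G := by
  have e1 : G * (G * X * G) = z • (G * X * G) + X * G := by
    calc G * (G * X * G) = (G * G) * (X * G) := by simp only [mul_assoc]
      _ = (z • G + 1) * (X * G) := by rw [h]
      _ = z • (G * (X * G)) + X * G := by rw [add_mul, one_mul, smul_mul_assoc]
      _ = z • (G * X * G) + X * G := by simp only [mul_assoc]
  have e2 : (G * X * G) * G = z • (G * X * G) + G * X := by
    calc (G * X * G) * G = (G * X) * (G * G) := by simp only [mul_assoc]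
      _ = (G * X) * (z • G + 1) := by rw [h]
      _ = z • ((G * X) * G) + G * X := by rw [mul_add, mul_one, mul_smul_comm]
  rw [mul_add, add_mul, e1, e2]
  abel

private lemma commute_gen_sum {k : ℕ} (hk : k < n - 1) :
    Commute (heckeGen (R := R) s n k)
      (∑ j ∈ Finset.Icc 2 n, murphyOp s n j) := by
  set g := heckeGen (R := R) s n k with hg
  -- the commutator with a single omega
  set c : ℕ → ℕ → Hecke R s n :=
    fun i j => g * omegaBraid s n i j - omegaBraid s n i j * g with hc
  have hpair : ∀ A B : Hecke R s n,
      g * (A + B) = (A + B) * g →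
      (g * A - A * g) + (g * B - B * g) = 0 := by
    intro A B hAB
    have : (g * A - A * g) + (g * B - B * g) = g * (A + B) - (A + B) * g := by
      noncomm_ring
    rw [this, hAB, sub_self]
  have hc_far : ∀ i j, 1 ≤ i → i < j → (j ≤ k ∨ k + 3 ≤ i) → c i j = 0 := by
    intro i j h1 h2 h
    exact sub_eq_zero_of_eq (commute_omega_far s n h1 h2 h)
  have hc_inside : ∀ i j, 1 ≤ i → i ≤ k → k + 3 ≤ j → j ≤ n → c i j = 0 := by
    intro i j h1 h2 h3 h4
    exact sub_eq_zero_of_eq (commute_omega_inside s n h1 h2 h3 h4)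
  have hc_diag : c (k+1) (k+2) = 0 := by
    have e : omegaBraid (R := R) s n (k+1) (k+2) = g := by
      have := omega_base s n (k+1)
      simpa using this
    simp [hc, e]
  -- the inner (commutator) sums
  set T : ℕ → Hecke R s n := fun j => ∑ i ∈ Finset.Ico 1 j, c i j with hT
  have hT_low : ∀ j, j ≤ k → T j = 0 := by
    intro j hj
    apply Finset.sum_eq_zero
    intro i hi
    simp only [Finset.mem_Ico] at hi
    exact hc_far i j hi.1 hi.2 (Or.inl hj)
  have hT_high : ∀ j, k + 3 ≤ j → j ≤ n → T j = 0 := by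
    intro j h3 h4
    have hsub : ({k+1, k+2} : Finset ℕ) ⊆ Finset.Ico 1 j := by
      intro x hx
      simp only [Finset.mem_insert, Finset.mem_singleton] at hx
      simp only [Finset.mem_Ico]
      omega
    have hzero : ∀ x ∈ Finset.Ico 1 j, x ∉ ({k+1, k+2} : Finset ℕ) →
        c x j = 0 := by
      intro x hx hx'
      simp only [Finset.mem_Ico] at hx
      simp only [Finset.mem_insert, Finset.mem_singleton, not_or] at hx'
      rcases Nat.lt_or_ge x (k+1) with h | h
      · exact hc_inside x j hx.1 (by omega) h3 h4
      · exact hc_far x j hx.1 hx.2 (Or.inr (by omega))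
    simp only [hT]
    rw [← Finset.sum_subset hsub hzero]
    rw [Finset.sum_pair (by omega : k + 1 ≠ k + 2)]
    apply hpair
    have e : omegaBraid (R := R) s n (k+1) j =
        g * omegaBraid s n (k+2) j * g := by
      have := omega_front s n (i := k+1) (by omega) (by omega) h4
      simpa using this
    have hq := hg_quad s n hk
    rw [e]
    have := quad_pair_aux (R := R) g (omegaBraid s n (k+2) j)
      ((s : R) - ((s⁻¹ : Rˣ) : R)) hq
    rw [add_comm (omegaBraid s n (k+2) j) (g * omegaBraid s n (k+2) j * g)] at this
    exact this
  have hT_pair : T (k+1) + T (k+2) = 0 := by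
    have e2 : T (k+2) = (∑ i ∈ Finset.Ico 1 (k+1), c i (k+2)) + c (k+1) (k+2) :=
      Finset.sum_Ico_succ_top (by omega) _
    simp only [hT] at e2 ⊢
    rw [e2, hc_diag, add_zero, ← Finset.sum_add_distrib]
    apply Finset.sum_eq_zero
    intro i hi
    simp only [Finset.mem_Ico] at hi
    apply hpair
    have e : omegaBraid (R := R) s n i (k+2) =
        g * omegaBraid s n i (k+1) * g := by
      have := omega_succ s n (i := i) (j := k+1) hi.1 (by omega)
      simpa using this
    rw [e]
    exact quad_pair_aux (R := R) g (omegaBraid s n i (k+1))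
      ((s : R) - ((s⁻¹ : Rˣ) : R)) (hg_quad s n hk)
  -- assemble
  have key : ∑ j ∈ Finset.Icc 2 n, T j = 0 := by
    rcases Nat.eq_zero_or_pos k with hk0 | hk1
    · subst hk0
      apply Finset.sum_eq_zero
      intro j hj
      simp only [Finset.mem_Icc] at hj
      rcases Nat.lt_or_ge j 3 with h3 | h3
      · -- j = 2 = k + 2
        have hj2 : j = 2 := by omega
        subst hj2
        have := hT_pair
        have h1 : T 1 = 0 := by
          simp only [hT]
          simp
        rw [h1, zero_add] at this
        exact this
      · exact hT_high j h3 hj.2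
    · have hsub : ({k+1, k+2} : Finset ℕ) ⊆ Finset.Icc 2 n := by
        intro x hx
        simp only [Finset.mem_insert, Finset.mem_singleton] at hx
        simp only [Finset.mem_Icc]
        omega
      have hzero : ∀ x ∈ Finset.Icc 2 n, x ∉ ({k+1, k+2} : Finset ℕ) →
          T x = 0 := by
        intro x hx hx'
        simp only [Finset.mem_Icc] at hx
        simp only [Finset.mem_insert, Finset.mem_singleton, not_or] at hx'
        rcases Nat.lt_or_ge x (k+1) with h | h
        · exact hT_low x (by omega)
        · exact hT_high x (by omega) hx.2
      rw [← Finset.sum_subset hsub hzero, Finset.sum_pair (by omega : k + 1 ≠ k + 2),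
        hT_pair]
  -- conclude
  show g * _ = _ * g
  rw [← sub_eq_zero, Finset.mul_sum, Finset.sum_mul, ← Finset.sum_sub_distrib]
  rw [← key]
  apply Finset.sum_congr rfl
  intro j _
  simp only [hT]
  rw [murphyOp, Finset.mul_sum, Finset.sum_mul, ← Finset.sum_sub_distrib]

/-- In the Hecke algebra `Hₙ`, the sum of the Murphy operators
`M = ∑_{j=2}^{n} M(j) = ∑_{1 ≤ i < j ≤ n} ω_{(i j)}` is central: it commutes
with every element of `Hₙ`. -/
theorem sum_murphyOp_central (s : Rˣ) (n : ℕ) (hn : 1 ≤ n) (x : Hecke R s n) :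
    (∑ j ∈ Finset.Icc 2 n, murphyOp s n j) * x
      = x * ∑ j ∈ Finset.Icc 2 n, murphyOp s n j := by
  obtain ⟨y, rfl⟩ := RingQuot.mkAlgHom_surjective R (HeckeRel R s n) x
  induction y using FreeAlgebra.induction with
  | grade0 r =>
    rw [AlgHom.commutes]
    exact (Algebra.commutes r _).symm
  | grade1 i =>
    have h := commute_gen_sum s n (k := (i : ℕ)) i.2
    rw [hg_in s n i.2] at h
    simpa using h.symm.eq
  | mul a b ha hb =>
    rw [map_mul, ← mul_assoc, ha, mul_assoc, hb, ← mul_assoc]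
  | add a b ha hb =>
    rw [map_add, mul_add, add_mul, ha, hb]

end MurphyCentral
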